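/- There exists an absolute constant C > 0 such that for every real X ≥ 3 and every integer k with k ≥ √(log X)/3, the number π_k(X) of squarefree integers ≤ X with exactly k prime factors satisfies π_k(X) ≤ C·(X/log X)·e^{−√(log X)}. -/

import Mathlib

set_option maxHeartbeats 1000000

open Finset Real

theorem L1 {p N : ℕ} (hp : p.Prime) : p ^ (N / p) ∣ Nat.factorial N := by
  rw [Nat.Prime.pow_dvd_factorial_iff hp (Nat.lt_succ_self _)]
  rcases lt_or_ge N p with h | h
  · simp [Nat.div_eq_of_lt h]
  · have hm : (1 : ℕ) ∈ Finset.Ico 1 (Nat.log p N).succ := by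
      simp only [Finset.mem_Ico, Nat.lt_succ_iff]
      exact ⟨le_refl 1, Nat.le_log_of_pow_le hp.one_lt (by simpa using h)⟩
    have := Finset.single_le_sum (f := fun i => N / p ^ i) (fun i _ => Nat.zero_le _) hm
    simpa using this

theorem L2 (N : ℕ) : (∏ p ∈ Nat.primesBelow (N + 1), p ^ (N / p)) ∣ Nat.factorial N := by
  classical
  have h : ∀ s : Finset ℕ, (∀ p ∈ s, p.Prime) → (∏ p ∈ s, p ^ (N / p)) ∣ Nat.factorial N := by
    intro s
    induction s using Finset.induction with
    | empty => simp [Nat.one_dvd]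
    | @insert a s ha ih =>
      intro hs
      rw [Finset.prod_insert ha]
      have hap : a.Prime := hs a (Finset.mem_insert_self a s)
      refine Nat.Coprime.mul_dvd_of_dvd_of_dvd ?_ (L1 hap) (ih fun p hp => hs p (Finset.mem_insert_of_mem hp))
      refine Nat.Coprime.pow_left _ (Nat.Coprime.prod_right fun q hq => Nat.Coprime.pow_right _ ?_)
      exact (Nat.coprime_primes hap (hs q (Finset.mem_insert_of_mem hq))).mpr (fun h => ha (h ▸ hq))
  exact h _ fun p hp => Nat.prime_of_mem_primesBelow hp
theorem LA {N : ℕ} (hN : 2 ≤ N) :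
    ∑ p ∈ Nat.primesBelow (N + 1), Real.log p / p ≤ Real.log N + Real.log 4 := by
  have hN0 : (0:ℝ) < N := by positivity
  have hprime : ∀ p ∈ Nat.primesBelow (N + 1), p.Prime := fun p hp => Nat.prime_of_mem_primesBelow hp
  -- log of the product
  have hlogprod : Real.log (∏ p ∈ Nat.primesBelow (N + 1), (p : ℝ) ^ (N / p)) =
      ∑ p ∈ Nat.primesBelow (N + 1), (N / p : ℕ) * Real.log p := by
    rw [Real.log_prod]
    · exact Finset.sum_congr rfl fun p hp => by
        rw [Real.log_pow]
    · intro p hp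
      have := (hprime p hp).pos
      positivity
  -- product ≤ N!
  have hdvd := L2 N
  have hprodpos : 0 < ∏ p ∈ Nat.primesBelow (N + 1), p ^ (N / p) :=
    Finset.prod_pos fun p hp => pow_pos (hprime p hp).pos _
  have hle : (∏ p ∈ Nat.primesBelow (N + 1), p ^ (N / p)) ≤ Nat.factorial N :=
    Nat.le_of_dvd (Nat.factorial_pos N) hdvd
  have hfact : Real.log (Nat.factorial N) ≤ N * Real.log N := by
    calc Real.log (Nat.factorial N) ≤ Real.log (((N:ℝ)) ^ N) := by
          refine Real.log_le_log (by positivity) ?_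
          exact_mod_cast Nat.factorial_le_pow N
      _ = N * Real.log N := by rw [Real.log_pow]
  have key : ∑ p ∈ Nat.primesBelow (N + 1), (N / p : ℕ) * Real.log p ≤ N * Real.log N := by
    rw [← hlogprod]
    calc Real.log (∏ p ∈ Nat.primesBelow (N + 1), (p : ℝ) ^ (N / p))
        = Real.log ((∏ p ∈ Nat.primesBelow (N + 1), p ^ (N / p) : ℕ) : ℝ) := by
          push_cast; ring_nf
      _ ≤ Real.log (Nat.factorial N) := Real.log_le_log (by exact_mod_cast hprodpos) (by exact_mod_cast hle)
      _ ≤ N * Real.log N := hfact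
  -- lower bound each term
  have hterm : ∀ p ∈ Nat.primesBelow (N + 1), ((N:ℝ) / p - 1) * Real.log p ≤ (N / p : ℕ) * Real.log p := by
    intro p hp
    have hp2 := (hprime p hp).two_le
    have hpp : (0:ℝ) < p := by positivity
    have hlogp : (0:ℝ) ≤ Real.log p := Real.log_nonneg (by exact_mod_cast le_trans one_le_two hp2)
    refine mul_le_mul_of_nonneg_right ?_ hlogp
    have hmod := Nat.div_add_mod N p
    have hmodlt : N % p < p := Nat.mod_lt _ (hprime p hp).pos
    have h1' : (N:ℝ) < ((N / p : ℕ) + 1) * p := by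
      have e : (p:ℝ) * (N / p : ℕ) + (N % p : ℕ) = N := by exact_mod_cast hmod
      have : ((N % p : ℕ) : ℝ) < p := by exact_mod_cast hmodlt
      nlinarith
    rw [div_sub_one (ne_of_gt hpp), div_le_iff₀ hpp]
    nlinarith
  have sum1 : ∑ p ∈ Nat.primesBelow (N + 1), ((N:ℝ) / p - 1) * Real.log p ≤ N * Real.log N :=
    le_trans (Finset.sum_le_sum hterm) key
  -- theta bound
  have htheta : ∑ p ∈ Nat.primesBelow (N + 1), Real.log p ≤ N * Real.log 4 := by
    have h1 : (primorial N : ℝ) ≤ (4:ℝ) ^ N := by exact_mod_cast primorial_le_4_pow N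
    have h2 : Real.log (primorial N) = ∑ p ∈ Nat.primesBelow (N + 1), Real.log p := by
      unfold primorial
      rw [show ({p ∈ Finset.range (N+1) | p.Prime} : Finset ℕ) = Nat.primesBelow (N+1) from rfl]
      rw [← Real.log_prod]
      · push_cast; ring_nf
      · exact fun p hp => by have := (hprime p hp).pos; positivity
    calc ∑ p ∈ Nat.primesBelow (N + 1), Real.log p = Real.log (primorial N) := h2.symm
      _ ≤ Real.log ((4:ℝ) ^ N) := Real.log_le_log (by exact_mod_cast primorial_pos N) h1
      _ = N * Real.log 4 := by rw [Real.log_pow]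
  -- combine
  have expand : ∀ p : ℕ, ((N:ℝ) / p - 1) * Real.log p = N * (Real.log p / p) - Real.log p := by
    intro p; field_simp
  have sum2 : N * (∑ p ∈ Nat.primesBelow (N + 1), Real.log p / p)
      - ∑ p ∈ Nat.primesBelow (N + 1), Real.log p ≤ N * Real.log N := by
    rw [Finset.mul_sum, ← Finset.sum_sub_distrib]
    calc ∑ p ∈ Nat.primesBelow (N + 1), ((N:ℝ) * (Real.log p / p) - Real.log p)
        = ∑ p ∈ Nat.primesBelow (N + 1), ((N:ℝ) / p - 1) * Real.log p :=
          Finset.sum_congr rfl fun p _ => (expand p).symm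
      _ ≤ N * Real.log N := sum1
  have : N * (∑ p ∈ Nat.primesBelow (N + 1), Real.log p / p) ≤ N * Real.log N + N * Real.log 4 := by
    linarith
  have := (mul_le_mul_iff_right₀ hN0).mp (by linarith : (N:ℝ) * (∑ p ∈ Nat.primesBelow (N + 1), Real.log p / p) ≤ N * (Real.log N + Real.log 4))
  exact this
-- sum of reciprocal primes bound
theorem LS {X : ℝ} (hX : 3 ≤ X) :
    ∑ p ∈ Nat.primesBelow (⌊X⌋₊ + 1), (1 : ℝ)/p ≤ 6 * Real.log (Real.log X) + 7 := by
  classical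
  set N := ⌊X⌋₊ with hNdef
  have hN3 : 3 ≤ N := Nat.le_floor (by exact_mod_cast hX)
  have hXpos : (0:ℝ) < X := by linarith
  have hNX : (N : ℝ) ≤ X := Nat.floor_le hXpos.le
  have hL1 : 1 < Real.log X := by
    have : Real.exp 1 < 3 := by
      have := Real.exp_one_lt_d9; linarith
    calc 1 = Real.log (Real.exp 1) := (Real.log_exp 1).symm
      _ < Real.log X := Real.log_lt_log (Real.exp_pos 1) (lt_of_lt_of_le this hX)
  have hLL0 : 0 ≤ Real.log (Real.log X) := Real.log_nonneg hL1.le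
  set J := Nat.log 2 (Nat.log 2 N) with hJdef
  set g : ℕ → ℕ := fun p => Nat.log 2 (Nat.log 2 p) with hgdef
  have hmaps : ∀ p ∈ Nat.primesBelow (N + 1), g p ∈ Finset.range (J + 1) := by
    intro p hp
    have hpN : p ≤ N := Nat.lt_succ_iff.mp (Nat.lt_of_mem_primesBelow hp)
    simp only [Finset.mem_range, Nat.lt_succ_iff]
    exact Nat.log_mono_right (Nat.log_mono_right hpN)
  have hsplit := Finset.sum_fiberwise_of_maps_to hmaps (fun p => (1:ℝ)/p)
  rw [← hsplit]
  -- bound each block by 4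
  have hblock : ∀ j ∈ Finset.range (J + 1),
      ∑ p ∈ (Nat.primesBelow (N + 1)).filter (fun p => g p = j), (1:ℝ)/p ≤ 4 := by
    intro j _
    set B : ℕ := 2 ^ (2 ^ (j + 1)) with hBdef
    set M : ℕ := min N B with hMdef
    have hB4 : 4 ≤ B := by
      have : 2 ^ 1 ≤ 2 ^ (j+1) := Nat.pow_le_pow_right (by norm_num) (by omega)
      calc (4:ℕ) = 2 ^ 2 := rfl
        _ ≤ 2 ^ (2 ^ (j+1)) := Nat.pow_le_pow_right (by norm_num) (by omega)
    have hM2 : 2 ≤ M := le_min (by omega) (by omega)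
    -- each p in block: 2^(2^j) ≤ p and p ≤ M
    have hsub : (Nat.primesBelow (N + 1)).filter (fun p => g p = j) ⊆ Nat.primesBelow (M + 1) := by
      intro p hp
      rw [Finset.mem_filter] at hp
      obtain ⟨hp1, hp2⟩ := hp
      have hprime := Nat.prime_of_mem_primesBelow hp1
      have hpN : p ≤ N := Nat.lt_succ_iff.mp (Nat.lt_of_mem_primesBelow hp1)
      have hp0 : p ≠ 0 := hprime.pos.ne'
      have ha1 : 1 ≤ Nat.log 2 p := Nat.le_log_of_pow_le one_lt_two (by simpa using hprime.two_le)
      have hpB : p < B := by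
        have h1 : p < 2 ^ (Nat.log 2 p + 1) := Nat.lt_pow_succ_log_self one_lt_two p
        have h2 : Nat.log 2 p + 1 ≤ 2 ^ (j + 1) := by
          have h3 := Nat.lt_pow_succ_log_self one_lt_two (Nat.log 2 p)
          have hp2' : Nat.log 2 (Nat.log 2 p) = j := hp2
          rw [hp2'] at h3
          omega
        exact lt_of_lt_of_le h1 (Nat.pow_le_pow_right (by norm_num) h2)
      exact Nat.mem_primesBelow.mpr ⟨by omega, hprime⟩
    have hlow : ∀ p ∈ (Nat.primesBelow (N + 1)).filter (fun p => g p = j),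
        (2:ℝ) ^ j * Real.log 2 ≤ Real.log p := by
      intro p hp
      rw [Finset.mem_filter] at hp
      obtain ⟨hp1, hp2⟩ := hp
      have hprime := Nat.prime_of_mem_primesBelow hp1
      have hp0 : p ≠ 0 := hprime.pos.ne'
      have h1 : 2 ^ (2 ^ j) ≤ p := by
        have hp2' : Nat.log 2 (Nat.log 2 p) = j := hp2
        have ha : 2 ^ j ≤ Nat.log 2 p := by
          rw [← hp2']
          exact Nat.pow_log_le_self 2 (by
            have : 1 ≤ Nat.log 2 p := Nat.le_log_of_pow_le one_lt_two (by simpa using hprime.two_le)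
            omega)
        calc 2 ^ (2^j) ≤ 2 ^ (Nat.log 2 p) := Nat.pow_le_pow_right (by norm_num) ha
          _ ≤ p := Nat.pow_log_le_self 2 hp0
      have h1' : ((2:ℝ)) ^ (2^j : ℕ) ≤ (p:ℝ) := by exact_mod_cast h1
      calc (2:ℝ) ^ j * Real.log 2 = Real.log ((2:ℝ) ^ (2^j : ℕ)) := by
            rw [Real.log_pow]; push_cast; ring
        _ ≤ Real.log p := Real.log_le_log (by positivity) h1'
    -- compare with log p / p sum
    have hstep : ∑ p ∈ (Nat.primesBelow (N + 1)).filter (fun p => g p = j), (1:ℝ)/p ≤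
        (1 / ((2:ℝ) ^ j * Real.log 2)) * ∑ p ∈ Nat.primesBelow (M + 1), Real.log p / p := by
      have hpos : (0:ℝ) < (2:ℝ) ^ j * Real.log 2 := by
        have := Real.log_pos one_lt_two; positivity
      have hc : (0:ℝ) < (2:ℝ) ^ j * Real.log 2 := hpos
      calc ∑ p ∈ (Nat.primesBelow (N + 1)).filter (fun p => g p = j), (1:ℝ)/p
          ≤ ∑ p ∈ (Nat.primesBelow (N + 1)).filter (fun p => g p = j),
            (1 / ((2:ℝ) ^ j * Real.log 2)) * (Real.log p / p) := by
            refine Finset.sum_le_sum fun p hp => ?_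
            have hlp := hlow p hp
            have hprime := Nat.prime_of_mem_primesBelow (Finset.mem_filter.mp hp).1
            have hp0 : (0:ℝ) < p := by exact_mod_cast hprime.pos
            rw [div_mul_div_comm, one_mul]
            rw [div_le_div_iff₀ hp0 (by positivity)]
            nlinarith
        _ ≤ ∑ p ∈ Nat.primesBelow (M + 1), (1 / ((2:ℝ) ^ j * Real.log 2)) * (Real.log p / p) := by
            refine Finset.sum_le_sum_of_subset_of_nonneg hsub fun p hp _ => ?_
            have hprime := Nat.prime_of_mem_primesBelow hp
            have h2 : (2:ℝ) ≤ p := by exact_mod_cast hprime.two_le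
            have : (0:ℝ) ≤ Real.log p := Real.log_nonneg (by linarith)
            positivity
        _ = (1 / ((2:ℝ) ^ j * Real.log 2)) * ∑ p ∈ Nat.primesBelow (M + 1), Real.log p / p := by
            rw [Finset.mul_sum]
    have hLA := LA hM2
    have hlogM : Real.log M ≤ (2:ℝ)^(j+1) * Real.log 2 := by
      have hMB : (M:ℝ) ≤ (2:ℝ) ^ ((2:ℕ)^(j+1)) := by
        exact_mod_cast le_trans (min_le_right N B) (le_of_eq (by push_cast; rw [hBdef]))
      calc Real.log M ≤ Real.log ((2:ℝ) ^ ((2:ℕ)^(j+1))) :=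
            Real.log_le_log (by exact_mod_cast (by omega : 0 < M)) hMB
        _ = (2:ℝ)^(j+1) * Real.log 2 := by rw [Real.log_pow]; push_cast; ring
    have hlog4 : Real.log 4 = 2 * Real.log 2 := by
      rw [show (4:ℝ) = 2^2 by norm_num, Real.log_pow]; push_cast; ring
    have hl2 : (0:ℝ) < Real.log 2 := Real.log_pos one_lt_two
    calc ∑ p ∈ (Nat.primesBelow (N + 1)).filter (fun p => g p = j), (1:ℝ)/p
        ≤ (1 / ((2:ℝ) ^ j * Real.log 2)) * ∑ p ∈ Nat.primesBelow (M + 1), Real.log p / p := hstep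
      _ ≤ (1 / ((2:ℝ) ^ j * Real.log 2)) * ((2:ℝ)^(j+1) * Real.log 2 + 2 * Real.log 2) := by
          refine mul_le_mul_of_nonneg_left ?_ (by positivity)
          calc ∑ p ∈ Nat.primesBelow (M + 1), Real.log p / p ≤ Real.log M + Real.log 4 := hLA
            _ ≤ (2:ℝ)^(j+1) * Real.log 2 + 2 * Real.log 2 := by rw [hlog4]; linarith
      _ = 2 + 2 / (2:ℝ)^j := by
          field_simp
          ring
      _ ≤ 4 := by
          have h1 : (1:ℝ) ≤ (2:ℝ)^j := one_le_pow₀ one_le_two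
          have : 2 / (2:ℝ)^j ≤ 2 := by
            rw [div_le_iff₀ (by positivity)]; nlinarith
          linarith
  -- total bound
  have htot : ∑ j ∈ Finset.range (J + 1), ∑ p ∈ (Nat.primesBelow (N + 1)).filter (fun p => g p = j), (1:ℝ)/p
      ≤ 4 * (J + 1) := by
    calc _ ≤ ∑ _j ∈ Finset.range (J + 1), (4:ℝ) := Finset.sum_le_sum hblock
      _ = 4 * (J + 1) := by rw [Finset.sum_const, Finset.card_range]; push_cast; ring
  refine le_trans htot ?_
  -- bound J
  have hJbound : (J:ℝ) ≤ (Real.log (Real.log X) + 1/2) / Real.log 2 := by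
    rcases Nat.eq_zero_or_pos J with hJ0 | hJ1
    · rw [hJ0]
      have hl2 : (0:ℝ) < Real.log 2 := Real.log_pos one_lt_two
      push_cast
      exact div_nonneg (by linarith) hl2.le
    · have ha2 : 2 ≤ Nat.log 2 N := by
        by_contra h
        push_neg at h
        interval_cases h' : Nat.log 2 N <;> simp_all [hJdef]
      -- 2^J ≤ Nat.log 2 N
      have h1 : 2 ^ J ≤ Nat.log 2 N := Nat.pow_log_le_self 2 (by omega)
      have h2 : 2 ^ (Nat.log 2 N) ≤ N := Nat.pow_log_le_self 2 (by omega)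
      have hl2 : (0:ℝ) < Real.log 2 := Real.log_pos one_lt_two
      have hNpos : (0:ℝ) < N := by exact_mod_cast (by omega : 0 < N)
      -- a := Nat.log 2 N;  a * log 2 ≤ log N ≤ log X
      have ha : (Nat.log 2 N : ℝ) * Real.log 2 ≤ Real.log X := by
        calc (Nat.log 2 N : ℝ) * Real.log 2 = Real.log ((2:ℝ) ^ (Nat.log 2 N)) := by
              rw [Real.log_pow]
          _ ≤ Real.log N := Real.log_le_log (by positivity) (by exact_mod_cast h2)
          _ ≤ Real.log X := Real.log_le_log hNpos hNX
      -- J * log 2 ≤ log a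
      have hJa : (J:ℝ) * Real.log 2 ≤ Real.log (Nat.log 2 N) := by
        calc (J:ℝ) * Real.log 2 = Real.log ((2:ℝ) ^ J) := by rw [Real.log_pow]
          _ ≤ Real.log (Nat.log 2 N) := Real.log_le_log (by positivity) (by exact_mod_cast h1)
      have hlogloga : Real.log (Nat.log 2 N) ≤ Real.log (Real.log X) - Real.log (Real.log 2) := by
        have hapos : (0:ℝ) < (Nat.log 2 N : ℝ) := by exact_mod_cast (by omega : 0 < Nat.log 2 N)
        have hstep2 : (Nat.log 2 N : ℝ) ≤ Real.log X / Real.log 2 := by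
          rw [le_div_iff₀ hl2]; exact ha
        calc Real.log (Nat.log 2 N) ≤ Real.log (Real.log X / Real.log 2) :=
              Real.log_le_log hapos hstep2
          _ = Real.log (Real.log X) - Real.log (Real.log 2) :=
              Real.log_div (by linarith) (ne_of_gt hl2)
      have hloglog2 : -(1/2 : ℝ) ≤ Real.log (Real.log 2) := by
        have h693 : (0.6931471803 : ℝ) < Real.log 2 := Real.log_two_gt_d9
        have : Real.log (1 / Real.log 2) ≤ 1 / Real.log 2 - 1 :=
          Real.log_le_sub_one_of_pos (by positivity)
        rw [Real.log_div one_ne_zero (ne_of_gt hl2), Real.log_one] at this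
        have hinv : 1 / Real.log 2 ≤ 1.5 := by
          rw [div_le_iff₀ hl2]; linarith
        linarith
      rw [le_div_iff₀ hl2]
      linarith
  have hl2 : (0.6931471803 : ℝ) < Real.log 2 := Real.log_two_gt_d9
  have hl2' : Real.log 2 < 0.6931471808 := Real.log_two_lt_d9
  have : (4:ℝ) * (J + 1) ≤ 4 * ((Real.log (Real.log X) + 1/2) / Real.log 2 + 1) := by
    have := hJbound; linarith
  refine le_trans this ?_
  have hdiv : (Real.log (Real.log X) + 1/2) / Real.log 2 ≤ (Real.log (Real.log X) + 1/2) / 0.6931471803 := by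
    refine div_le_div_of_nonneg_left (by linarith) (by norm_num) (by linarith)
  have hexpand : (Real.log (Real.log X) + 1/2) / 0.6931471803 ≤ 1.45 * Real.log (Real.log X) + 0.73 := by
    rw [div_le_iff₀ (by norm_num)]
    nlinarith
  nlinarith [hdiv, hexpand, hLL0]
theorem Lesymm (s : Finset ℕ) (f : ℕ → ℝ) (hf : ∀ i ∈ s, 0 ≤ f i) :
    ∀ k : ℕ, (Nat.factorial k : ℝ) * ∑ A ∈ s.powersetCard k, ∏ p ∈ A, f p ≤ (∑ p ∈ s, f p) ^ k := by
  classical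
  intro k
  induction k with
  | zero => simp
  | succ k ih =>
    have hsum0 : (0:ℝ) ≤ ∑ p ∈ s, f p := Finset.sum_nonneg hf
    have hek : (0:ℝ) ≤ ∑ A ∈ s.powersetCard k, ∏ p ∈ A, f p := by
      refine Finset.sum_nonneg fun A hA => Finset.prod_nonneg fun p hp => ?_
      exact hf p (Finset.mem_of_subset (Finset.mem_powersetCard.mp hA).1 hp)
    -- key: (k+1) * e_{k+1} ≤ (∑ f) * e_k
    have key : ((k:ℝ) + 1) * ∑ A ∈ s.powersetCard (k+1), ∏ p ∈ A, f p ≤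
        (∑ p ∈ s, f p) * ∑ A ∈ s.powersetCard k, ∏ p ∈ A, f p := by
      have lhs_eq : ((k:ℝ) + 1) * ∑ A ∈ s.powersetCard (k+1), ∏ p ∈ A, f p =
          ∑ q ∈ (s.powersetCard (k+1)).sigma (fun A => A), f q.2 * ∏ p ∈ q.1.erase q.2, f p := by
        rw [Finset.sum_sigma, Finset.mul_sum]
        refine Finset.sum_congr rfl fun A hA => ?_
        have hcard : A.card = k + 1 := (Finset.mem_powersetCard.mp hA).2
        have : ∀ x ∈ A, f x * ∏ p ∈ A.erase x, f p = ∏ p ∈ A, f p := by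
          intro x hx
          rw [← Finset.prod_erase_mul A f hx]; ring
        rw [Finset.sum_congr rfl this, Finset.sum_const, hcard]
        push_cast; ring
      have rhs_eq : (∑ p ∈ s, f p) * ∑ A ∈ s.powersetCard k, ∏ p ∈ A, f p =
          ∑ q ∈ s.sigma (fun _ => s.powersetCard k), f q.1 * ∏ p ∈ q.2, f p := by
        rw [Finset.sum_sigma, Finset.sum_mul]
        refine Finset.sum_congr rfl fun x hx => ?_
        rw [Finset.mul_sum]
      rw [lhs_eq, rhs_eq]
      -- injection
      set e : (Σ _ : Finset ℕ, ℕ) → (Σ _ : ℕ, Finset ℕ) := fun q => ⟨q.2, q.1.erase q.2⟩ with he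
      have hinj : Set.InjOn e ((s.powersetCard (k+1)).sigma (fun A => A)) := by
        intro q1 h1 q2 h2 heq
        simp only [Finset.mem_sigma, Finset.mem_coe] at h1 h2
        obtain ⟨hA1, hx1⟩ := h1
        obtain ⟨hA2, hx2⟩ := h2
        simp only [he, Sigma.mk.inj_iff] at heq
        obtain ⟨hx, hB⟩ := heq
        have hB' : q1.1.erase q1.2 = q2.1.erase q2.2 := by exact_mod_cast (eq_of_heq hB)
        have hA : q1.1 = q2.1 := by
          rw [← Finset.insert_erase hx1, ← Finset.insert_erase hx2, hB', hx]
        exact Sigma.ext hA (by rw [hx])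
      have hmaps : ∀ q ∈ (s.powersetCard (k+1)).sigma (fun A => A),
          e q ∈ s.sigma (fun _ => s.powersetCard k) := by
        intro q hq
        simp only [Finset.mem_sigma] at hq ⊢
        obtain ⟨hA, hx⟩ := hq
        have hsub := (Finset.mem_powersetCard.mp hA).1
        have hcard := (Finset.mem_powersetCard.mp hA).2
        constructor
        · exact hsub hx
        · refine Finset.mem_powersetCard.mpr ⟨le_trans (Finset.erase_subset _ _) hsub, ?_⟩
          rw [Finset.card_erase_of_mem hx, hcard]
          omega
      calc ∑ q ∈ (s.powersetCard (k+1)).sigma (fun A => A), f q.2 * ∏ p ∈ q.1.erase q.2, f p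
          = ∑ q ∈ ((s.powersetCard (k+1)).sigma (fun A => A)).image e, f q.1 * ∏ p ∈ q.2, f p := by
            rw [Finset.sum_image (fun q1 h1 q2 h2 h => hinj h1 h2 h)]
        _ ≤ ∑ q ∈ s.sigma (fun _ => s.powersetCard k), f q.1 * ∏ p ∈ q.2, f p := by
            refine Finset.sum_le_sum_of_subset_of_nonneg ?_ ?_
            · intro q hq
              obtain ⟨q', hq', rfl⟩ := Finset.mem_image.mp hq
              exact hmaps q' hq'
            · intro q hq _
              simp only [Finset.mem_sigma] at hq
              refine mul_nonneg (hf _ hq.1) (Finset.prod_nonneg fun p hp => ?_)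
              exact hf p (Finset.mem_of_subset (Finset.mem_powersetCard.mp hq.2).1 hp)
    calc (Nat.factorial (k+1) : ℝ) * ∑ A ∈ s.powersetCard (k+1), ∏ p ∈ A, f p
        = (Nat.factorial k : ℝ) * (((k:ℝ)+1) * ∑ A ∈ s.powersetCard (k+1), ∏ p ∈ A, f p) := by
          rw [Nat.factorial_succ]; push_cast; ring
      _ ≤ (Nat.factorial k : ℝ) * ((∑ p ∈ s, f p) * ∑ A ∈ s.powersetCard k, ∏ p ∈ A, f p) := by
          refine mul_le_mul_of_nonneg_left key (by positivity)
      _ = (∑ p ∈ s, f p) * ((Nat.factorial k : ℝ) * ∑ A ∈ s.powersetCard k, ∏ p ∈ A, f p) := by ring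
      _ ≤ (∑ p ∈ s, f p) * (∑ p ∈ s, f p) ^ k := mul_le_mul_of_nonneg_left ih hsum0
      _ = (∑ p ∈ s, f p) ^ (k+1) := by ring
theorem Lcount {X : ℝ} (hX : 3 ≤ X) (k : ℕ) :
    ∃ T : Finset ℕ,
      {n : ℕ | (n : ℝ) ≤ X ∧ Squarefree n ∧ n.primeFactors.card = k} = ↑T ∧
      (T.card : ℝ) ≤ X ∧
      (Nat.factorial k : ℝ) * (T.card : ℝ) ≤
        X * (∑ p ∈ Nat.primesBelow (⌊X⌋₊ + 1), (1:ℝ)/p) ^ k := by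
  classical
  have hX0 : (0:ℝ) < X := by linarith
  set N := ⌊X⌋₊ with hN
  refine ⟨(Finset.range (N + 1)).filter
      (fun (n : ℕ) => (n : ℝ) ≤ X ∧ Squarefree n ∧ n.primeFactors.card = k), ?_, ?_, ?_⟩
  · ext n
    simp only [Set.mem_setOf_eq, Finset.coe_filter, Finset.mem_range, Set.mem_setOf_eq,
      Finset.mem_coe, Finset.mem_filter]
    constructor
    · rintro ⟨h1, h2, h3⟩
      exact ⟨Nat.lt_succ_iff.mpr (Nat.le_floor h1), h1, h2, h3⟩
    · rintro ⟨_, h⟩; exact h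
  · -- card ≤ X
    set T := (Finset.range (N + 1)).filter
      (fun (n : ℕ) => (n : ℝ) ≤ X ∧ Squarefree n ∧ n.primeFactors.card = k) with hT
    have hsub : T ⊆ (Finset.range (N + 1)).erase 0 := by
      intro n hn
      rw [hT, Finset.mem_filter] at hn
      refine Finset.mem_erase.mpr ⟨?_, hn.1⟩
      rintro rfl
      exact not_squarefree_zero hn.2.2.1
    calc (T.card : ℝ) ≤ (((Finset.range (N + 1)).erase 0).card : ℝ) := by
          exact_mod_cast Finset.card_le_card hsub
      _ = (N : ℝ) := by rw [Finset.card_erase_of_mem (by simp), Finset.card_range]; push_cast; ring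
      _ ≤ X := Nat.floor_le hX0.le
  · -- main bound
    set T := (Finset.range (N + 1)).filter
      (fun (n : ℕ) => (n : ℝ) ≤ X ∧ Squarefree n ∧ n.primeFactors.card = k) with hT
    set s := Nat.primesBelow (N + 1) with hs
    have hmem : ∀ n ∈ T, (n:ℝ) ≤ X ∧ Squarefree n ∧ n.primeFactors.card = k := by
      intro n hn; rw [hT, Finset.mem_filter] at hn; exact hn.2
    have hpos : ∀ n ∈ T, 0 < n := by
      intro n hn
      rcases Nat.eq_zero_or_pos n with rfl | h
      · exact absurd (hmem _ hn).2.1 not_squarefree_zero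
      · exact h
    -- step 1: card ≤ X * ∑ 1/n
    have step1 : (T.card : ℝ) ≤ X * ∑ n ∈ T, (1:ℝ)/n := by
      rw [Finset.mul_sum]
      calc (T.card : ℝ) = ∑ _n ∈ T, (1:ℝ) := by rw [Finset.sum_const]; push_cast; ring
        _ ≤ ∑ n ∈ T, X * (1/n) := by
            refine Finset.sum_le_sum fun n hn => ?_
            have h1 : (0:ℝ) < n := by exact_mod_cast hpos n hn
            rw [mul_one_div, le_div_iff₀ h1, one_mul]
            exact (hmem n hn).1
    -- step 2: ∑ 1/n ≤ e_k
    have step2 : ∑ n ∈ T, (1:ℝ)/n ≤ ∑ A ∈ s.powersetCard k, ∏ p ∈ A, (1:ℝ)/p := by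
      have hmapsto : ∀ n ∈ T, n.primeFactors ∈ s.powersetCard k := by
        intro n hn
        obtain ⟨h1, h2, h3⟩ := hmem n hn
        refine Finset.mem_powersetCard.mpr ⟨?_, h3⟩
        intro p hp
        have hpd := Nat.dvd_of_mem_primeFactors hp
        have hple : p ≤ n := Nat.le_of_dvd (hpos n hn) hpd
        have hnN : n ≤ N := Nat.le_floor h1
        exact Nat.mem_primesBelow.mpr ⟨by omega, Nat.prime_of_mem_primeFactors hp⟩
      have hinj : ∀ n1 ∈ T, ∀ n2 ∈ T, n1.primeFactors = n2.primeFactors → n1 = n2 := by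
        intro n1 h1 n2 h2 he
        have e1 := Nat.prod_primeFactors_of_squarefree (hmem n1 h1).2.1
        have e2 := Nat.prod_primeFactors_of_squarefree (hmem n2 h2).2.1
        rw [← e1, ← e2, he]
      have hval : ∀ n ∈ T, (1:ℝ)/n = ∏ p ∈ n.primeFactors, (1:ℝ)/p := by
        intro n hn
        have e1 := Nat.prod_primeFactors_of_squarefree (hmem n hn).2.1
        have e2 : (n:ℝ) = ∏ p ∈ n.primeFactors, (p:ℝ) := by rw [← Nat.cast_prod, e1]
        rw [e2]
        simp only [one_div, ← Finset.prod_inv_distrib]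
      calc ∑ n ∈ T, (1:ℝ)/n = ∑ n ∈ T, ∏ p ∈ n.primeFactors, (1:ℝ)/p :=
            Finset.sum_congr rfl hval
        _ = ∑ A ∈ T.image (fun n => n.primeFactors), ∏ p ∈ A, (1:ℝ)/p := by
            rw [Finset.sum_image hinj]
        _ ≤ ∑ A ∈ s.powersetCard k, ∏ p ∈ A, (1:ℝ)/p := by
            refine Finset.sum_le_sum_of_subset_of_nonneg ?_ ?_
            · intro A hA
              obtain ⟨n, hn, rfl⟩ := Finset.mem_image.mp hA
              exact hmapsto n hn
            · intro A _ _
              exact Finset.prod_nonneg fun p _ => by positivity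
    -- combine with Lesymm
    have he := Lesymm s (fun p => (1:ℝ)/p) (fun p _ => by positivity) k
    have hfk : (0:ℝ) < (Nat.factorial k : ℝ) := by exact_mod_cast Nat.factorial_pos k
    calc (Nat.factorial k : ℝ) * (T.card : ℝ)
        ≤ (Nat.factorial k : ℝ) * (X * ∑ n ∈ T, (1:ℝ)/n) :=
          mul_le_mul_of_nonneg_left step1 hfk.le
      _ ≤ (Nat.factorial k : ℝ) * (X * ∑ A ∈ s.powersetCard k, ∏ p ∈ A, (1:ℝ)/p) := by
          refine mul_le_mul_of_nonneg_left (mul_le_mul_of_nonneg_left step2 hX0.le) hfk.le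
      _ = X * ((Nat.factorial k : ℝ) * ∑ A ∈ s.powersetCard k, ∏ p ∈ A, (1:ℝ)/p) := by ring
      _ ≤ X * (∑ p ∈ s, (1:ℝ)/p) ^ k := mul_le_mul_of_nonneg_left he hX0.le
theorem pow_self_le_factorial_mul_exp (k : ℕ) :
    ((k:ℝ)) ^ k ≤ (Nat.factorial k : ℝ) * Real.exp 1 ^ k := by
  have h := Real.sum_le_exp_of_nonneg (x := (k:ℝ)) (by positivity) (k + 1)
  have hterm : ((k:ℝ)) ^ k / (Nat.factorial k : ℝ) ≤ Real.exp k := by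
    refine le_trans ?_ h
    refine Finset.single_le_sum (f := fun i => (k:ℝ) ^ i / Nat.factorial i) ?_ ?_
    · intro i _; positivity
    · simp
  have hfk : (0:ℝ) < (Nat.factorial k : ℝ) := by exact_mod_cast Nat.factorial_pos k
  rw [div_le_iff₀ hfk] at hterm
  calc ((k:ℝ)) ^ k ≤ Real.exp k * (Nat.factorial k : ℝ) := hterm
    _ = (Nat.factorial k : ℝ) * Real.exp 1 ^ k := by rw [Real.exp_one_pow]; ring

theorem stmt15 :
    ∃ C : ℝ, 0 < C ∧ ∀ X : ℝ, 3 ≤ X → ∀ k : ℕ,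
      Real.sqrt (Real.log X) / 3 ≤ (k : ℝ) →
      (Set.ncard {n : ℕ | (n : ℝ) ≤ X ∧ Squarefree n ∧ n.primeFactors.card = k} : ℝ) ≤
        C * (X / Real.log X) * Real.exp (-Real.sqrt (Real.log X)) := by
  refine ⟨Real.exp (10^11), Real.exp_pos _, ?_⟩
  intro X hX k hk
  set C := Real.exp (10^11) with hC
  have hC1 : (1:ℝ) ≤ C := Real.one_le_exp (by norm_num)
  have hX0 : (0:ℝ) < X := by linarith
  set L := Real.log X with hL
  have hL1 : 1 < L := by
    have he : Real.exp 1 < 3 := by have := Real.exp_one_lt_d9; linarith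
    calc 1 = Real.log (Real.exp 1) := (Real.log_exp 1).symm
      _ < L := Real.log_lt_log (Real.exp_pos 1) (lt_of_lt_of_le he hX)
  have hsqL : Real.sqrt L ^ 2 = L := Real.sq_sqrt (by linarith)
  have hsqL0 : 0 < Real.sqrt L := Real.sqrt_pos.mpr (by linarith)
  obtain ⟨T, hTset, hTX, hTbound⟩ := Lcount hX k
  rw [hTset, Set.ncard_coe_finset]
  have hexppos : (0:ℝ) < Real.exp (-Real.sqrt L) := Real.exp_pos _
  rcases le_or_gt L (10^20) with hsmall | hbig
  · -- small X : card ≤ X ≤ C * (X/L) * exp(-√L)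
    have hsL : Real.sqrt L ≤ 10^10 := by
      rw [show ((10:ℝ)^10) = Real.sqrt ((10^10)^2) from (Real.sqrt_sq (by positivity)).symm]
      exact Real.sqrt_le_sqrt (by nlinarith)
    have hLC : L * Real.exp (Real.sqrt L) ≤ C := by
      have h1 : Real.exp (Real.sqrt L) ≤ Real.exp (10^10) := Real.exp_le_exp.mpr hsL
      have h2 : (10:ℝ)^20 ≤ Real.exp 48 := by
        have he : (2.7:ℝ) < Real.exp 1 := by have := Real.exp_one_gt_d9; linarith
        have h3 : (2.7:ℝ)^48 ≤ Real.exp 1 ^ 48 := pow_le_pow_left₀ (by norm_num) he.le 48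
        have h4 : Real.exp 1 ^ 48 = Real.exp 48 := by
          rw [Real.exp_one_pow]; norm_num
        have h5 : (10:ℝ)^20 ≤ (2.7:ℝ)^48 := by norm_num
        linarith
      calc L * Real.exp (Real.sqrt L) ≤ 10^20 * Real.exp (10^10) := by
            have := Real.exp_pos (Real.sqrt L)
            nlinarith
        _ ≤ Real.exp 48 * Real.exp (10^10) :=
            mul_le_mul_of_nonneg_right h2 (Real.exp_pos _).le
        _ = Real.exp (48 + 10^10) := (Real.exp_add _ _).symm
        _ ≤ C := Real.exp_le_exp.mpr (by norm_num)
    have heq : C * (X / L) * Real.exp (-Real.sqrt L) = (C * X) / (L * Real.exp (Real.sqrt L)) := by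
      rw [Real.exp_neg]
      field_simp
    rw [heq, le_div_iff₀ (by positivity)]
    calc (T.card : ℝ) * (L * Real.exp (Real.sqrt L)) ≤ X * C := by
          have h0 : (0:ℝ) ≤ (T.card : ℝ) := by positivity
          have hTX' : (T.card : ℝ) ≤ X := hTX
          have hpos2 : (0:ℝ) < L * Real.exp (Real.sqrt L) := by positivity
          nlinarith
      _ = C * X := by ring
  · -- large X
    set S := ∑ p ∈ Nat.primesBelow (⌊X⌋₊ + 1), (1:ℝ)/p with hS
    have hS0 : 0 ≤ S := Finset.sum_nonneg fun p _ => by positivity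
    have hS6 : S ≤ 6 * Real.log L + 7 := LS hX
    set Q := Real.sqrt (Real.sqrt L) with hQ
    have hQ2 : Q^2 = Real.sqrt L := Real.sq_sqrt (Real.sqrt_nonneg L)
    have hQ4 : Q^4 = L := by
      have : Q^4 = (Q^2)^2 := by ring
      rw [this, hQ2, hsqL]
    have hQpos : 0 < Q := Real.sqrt_pos.mpr hsqL0
    have hQ5 : (10:ℝ)^5 ≤ Q := by
      by_contra h
      push_neg at h
      have h2 : Q^2 < 10^10 := by nlinarith
      have h4 : Q^4 < 10^20 := by nlinarith
      rw [hQ4] at h4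
      linarith
    have hlogL : Real.log L ≤ 4 * Q := by
      have h1 : Real.log L = 4 * Real.log Q := by
        rw [← hQ4, Real.log_pow]; push_cast; ring
      have h2 : Real.log Q ≤ Q - 1 := Real.log_le_sub_one_of_pos hQpos
      linarith
    have hS31 : S ≤ 31 * Q := by nlinarith
    have hkQ : Q^2/3 ≤ (k:ℝ) := by rw [hQ2]; exact hk
    have hkR : (0:ℝ) < (k:ℝ) := by nlinarith
    have hfk : (0:ℝ) < (Nat.factorial k : ℝ) := by exact_mod_cast Nat.factorial_pos k
    -- step i : S^k ≤ k! * (e*S/k)^k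
    have hstepi : S ^ k ≤ (Nat.factorial k : ℝ) * (Real.exp 1 * S / k)^k := by
      have h1 := pow_self_le_factorial_mul_exp k
      have hpk : (0:ℝ) < (k:ℝ)^k := pow_pos hkR k
      have heq : (Real.exp 1 * S / k)^k = Real.exp 1^k * S^k / (k:ℝ)^k := by
        rw [div_pow, mul_pow]
      rw [heq]
      rw [show (Nat.factorial k : ℝ) * (Real.exp 1^k * S^k / (k:ℝ)^k)
          = ((Nat.factorial k : ℝ) * (Real.exp 1^k * S^k)) / (k:ℝ)^k by ring]
      rw [le_div_iff₀ hpk]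
      have h2 : (k:ℝ)^k * S^k ≤ ((Nat.factorial k : ℝ) * Real.exp 1^k) * S^k :=
        mul_le_mul_of_nonneg_right h1 (pow_nonneg hS0 k)
      calc S ^ k * (k:ℝ)^k = (k:ℝ)^k * S^k := by ring
        _ ≤ ((Nat.factorial k : ℝ) * Real.exp 1^k) * S^k := h2
        _ = (Nat.factorial k : ℝ) * (Real.exp 1^k * S^k) := by ring
    -- step ii : e*S/k ≤ exp(-4)
    have hii : Real.exp 1 * S / k ≤ Real.exp (-4 : ℝ) := by
      have he1 : Real.exp 1 ≤ 2.72 := by have := Real.exp_one_lt_d9; linarith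
      have he1' : (0:ℝ) < Real.exp 1 := Real.exp_pos 1
      have hub : Real.exp 1 * S / k ≤ 2.72 * (31 * Q) / (Q^2/3) := by
        refine div_le_div₀ (by positivity) ?_ (by positivity) hkQ
        exact mul_le_mul he1 hS31 hS0 (by norm_num)
      have heq2 : 2.72 * (31 * Q) / (Q^2/3) = 252.96 / Q := by
        field_simp
        ring
      have hub2 : 252.96 / Q ≤ 252.96 / 10^5 :=
        div_le_div_of_nonneg_left (by norm_num) (by positivity) hQ5
      have hexp4 : Real.exp (4:ℝ) ≤ 55 := by
        have h3 : Real.exp 1 ^ 4 = Real.exp (4:ℝ) := by rw [Real.exp_one_pow]; norm_num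
        have h5 : Real.exp 1 ^ 4 ≤ (2.72:ℝ)^4 := pow_le_pow_left₀ he1'.le he1 4
        have h6 : (2.72:ℝ)^4 ≤ 55 := by norm_num
        linarith
      have hexpneg : (1:ℝ)/55 ≤ Real.exp (-4 : ℝ) := by
        rw [Real.exp_neg]
        rw [div_le_iff₀ (by norm_num), inv_mul_eq_div, le_div_iff₀ (Real.exp_pos 4)]
        linarith
      calc Real.exp 1 * S / k ≤ 252.96 / Q := by rw [← heq2]; exact hub
        _ ≤ 252.96 / 10^5 := hub2
        _ ≤ 1/55 := by norm_num
        _ ≤ Real.exp (-4 : ℝ) := hexpneg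
    have hbase0 : 0 ≤ Real.exp 1 * S / k := by positivity
    -- step iii
    have hiii : (Real.exp (-4 : ℝ))^k ≤ Real.exp (-Real.sqrt L) / L := by
      have h1 : (Real.exp (-4:ℝ))^k = Real.exp (-(4*k)) := by
        rw [← Real.exp_nat_mul]
        ring_nf
      have h12 : 12 * Q ≤ Q^2 := by nlinarith
      have h2 : Real.sqrt L + Real.log L ≤ 4 * k := by
        nlinarith [hkQ, hlogL, hQ2]
      have h3 : Real.exp (-(4*(k:ℝ))) ≤ Real.exp (-(Real.sqrt L + Real.log L)) :=
        Real.exp_le_exp.mpr (by linarith)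
      have h4 : Real.exp (-(Real.sqrt L + Real.log L)) = Real.exp (-Real.sqrt L) / L := by
        rw [show -(Real.sqrt L + Real.log L) = (-Real.sqrt L) + (-(Real.log L)) by ring,
          Real.exp_add, Real.exp_neg (Real.log L), Real.exp_log (by linarith : (0:ℝ) < L),
          div_eq_mul_inv]
      rw [h1]
      rw [← h4]
      exact h3
    -- combine
    have hpow : (Real.exp 1 * S / k)^k ≤ (Real.exp (-4:ℝ))^k :=
      pow_le_pow_left₀ hbase0 hii k
    have hfinal : (T.card:ℝ) ≤ X * (Real.exp (-Real.sqrt L) / L) := by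
      have c1 : (Nat.factorial k : ℝ) * (T.card:ℝ) ≤ X * ((Nat.factorial k : ℝ) * (Real.exp 1 * S / k)^k) := by
        calc (Nat.factorial k : ℝ) * (T.card:ℝ) ≤ X * S ^ k := hTbound
          _ ≤ X * ((Nat.factorial k : ℝ) * (Real.exp 1 * S / k)^k) :=
            mul_le_mul_of_nonneg_left hstepi hX0.le
      have c2 : (T.card:ℝ) ≤ X * (Real.exp 1 * S / k)^k := by
        have := (mul_le_mul_iff_right₀ hfk).mp (by linarith [c1] :
          (Nat.factorial k : ℝ) * (T.card:ℝ) ≤ (Nat.factorial k : ℝ) * (X * (Real.exp 1 * S / k)^k))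
        exact this
      calc (T.card:ℝ) ≤ X * (Real.exp 1 * S / k)^k := c2
        _ ≤ X * (Real.exp (-4:ℝ))^k := mul_le_mul_of_nonneg_left hpow hX0.le
        _ ≤ X * (Real.exp (-Real.sqrt L) / L) := mul_le_mul_of_nonneg_left hiii hX0.le
    calc (T.card:ℝ) ≤ X * (Real.exp (-Real.sqrt L) / L) := hfinal
      _ = 1 * (X / L * Real.exp (-Real.sqrt L)) := by ring
      _ ≤ C * (X / L * Real.exp (-Real.sqrt L)) := by
          refine mul_le_mul_of_nonneg_right hC1 ?_
          have hLpos : (0:ℝ) < L := by linarith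
          positivity
      _ = C * (X / L) * Real.exp (-Real.sqrt L) := by ring
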